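/- Let {x_n} be a sequence of nonzero vectors in H with ‖x_n‖ → ∞ as n → ∞. Suppose there exists an infinite-dimensional closed subspace M of H such that {P_M x_n} is a Bessel sequence in M. Then {x_n/‖x_n‖} does not satisfy a lower frame condition for H. -/

import Mathlib

open scoped ComplexInnerProductSpace ENNReal
open Filter Topology

noncomputable section

variable {E : Type*} [NormedAddCommGroup E] [InnerProductSpace ℂ E]

/-- `y` is a Bessel sequence with Bessel bound `B`:
`∑ᵢ |⟪z, yᵢ⟫|² ≤ B‖z‖²` for all `z` (sum taken in `ℝ≥0∞` so that divergence is handled). -/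
def BesselWith {ι : Type*} (y : ι → E) (B : ℝ) : Prop :=
  ∀ z : E, ∑' i, ENNReal.ofReal (‖⟪z, y i⟫‖ ^ 2) ≤ ENNReal.ofReal (B * ‖z‖ ^ 2)

/-- `y` satisfies the lower frame condition with bound `A`:
`A‖z‖² ≤ ∑ᵢ |⟪z, yᵢ⟫|²` for all `z`. -/
def LowerFrameWith {ι : Type*} (y : ι → E) (A : ℝ) : Prop :=
  ∀ z : E, ENNReal.ofReal (A * ‖z‖ ^ 2) ≤ ∑' i, ENNReal.ofReal (‖⟪z, y i⟫‖ ^ 2)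

/-- `y` is a frame with frame bounds `A ≤ B`. -/
def FrameWith {ι : Type*} (y : ι → E) (A B : ℝ) : Prop :=
  0 < A ∧ A ≤ B ∧ LowerFrameWith y A ∧ BesselWith y B

/-- The normalized sequence `yᵢ/‖yᵢ‖`. -/
def normalizeSeq {ι : Type*} (y : ι → E) : ι → E := fun i => (‖y i‖ : ℂ)⁻¹ • y i

/-- If `‖x_n‖ → ∞` and the orthogonal projections of the `x_n` onto some
infinite-dimensional closed subspace `M` form a Bessel sequence in `M`, then the normalized
sequence does not satisfy a lower frame condition for `H`. -/
theorem stmt11 {H : Type*} [NormedAddCommGroup H] [InnerProductSpace ℂ H] [CompleteSpace H]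
    (x : ℕ → H) (hx : ∀ n, x n ≠ 0)
    (h0 : Tendsto (fun n => ‖x n‖) atTop atTop)
    (M : Submodule ℂ H) [CompleteSpace M] (hM : ¬ FiniteDimensional ℂ M)
    (hB : ∃ B : ℝ, BesselWith (fun n => (M.orthogonalProjectionOnto (x n) : M)) B) :
    ¬ ∃ A > (0 : ℝ), LowerFrameWith (normalizeSeq x) A := by
  rintro ⟨A, hA, hLF⟩
  obtain ⟨B0, hB0⟩ := hB
  set B : ℝ := max B0 1 with hBdef
  have hB1 : (1:ℝ) ≤ B := le_max_right _ _
  have hBpos : (0:ℝ) < B := lt_of_lt_of_le one_pos hB1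
  have hBes : BesselWith (fun n => (M.orthogonalProjectionOnto (x n) : M)) B := by
    intro z
    refine (hB0 z).trans (ENNReal.ofReal_le_ofReal ?_)
    exact mul_le_mul_of_nonneg_right (le_max_left _ _) (by positivity)
  -- choose N so that ‖x n‖^2 ≥ 2B/A for n ≥ N
  have hNex : ∀ᶠ n in atTop, Real.sqrt (2 * B / A) ≤ ‖x n‖ :=
    h0.eventually_ge_atTop _
  obtain ⟨N, hN⟩ := hNex.exists_forall_of_atTop
  -- finite dimensional span of the first N projections
  set v : Fin N → M := fun k => M.orthogonalProjectionOnto (x k) with hv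
  set W : Submodule ℂ M := Submodule.span ℂ (Set.range v) with hW
  have hWfd : FiniteDimensional ℂ W := by
    apply FiniteDimensional.span_of_finite
    exact Set.finite_range v
  have hWne : Wᗮ ≠ ⊥ := by
    intro h
    rw [Submodule.orthogonal_eq_bot_iff] at h
    rw [h] at hWfd
    exact hM (Submodule.topEquiv.finiteDimensional)
  obtain ⟨z₀, hz₀W, hz₀⟩ := Submodule.exists_mem_ne_zero_of_ne_bot hWne
  set z : H := (z₀ : H) with hz
  have hzne : z ≠ 0 := fun h => hz₀ (Subtype.coe_injective h)
  have hznorm : ‖z‖ = ‖z₀‖ := rfl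
  -- inner products
  have hinner : ∀ n, ⟪z₀, M.orthogonalProjectionOnto (x n)⟫ = ⟪z, x n⟫ := fun n =>
    Submodule.inner_orthogonalProjectionOnto_eq_of_mem_left z₀ (x n)
  have hzero : ∀ k : Fin N, ⟪z, x k⟫ = 0 := by
    intro k
    rw [← hinner, ← inner_conj_symm, hz₀W (v k) (Submodule.subset_span ⟨k, rfl⟩), map_zero]
  -- term computation
  have hterm : ∀ n, ‖⟪z, normalizeSeq x n⟫‖ ^ 2 = ‖⟪z, x n⟫‖ ^ 2 * (‖x n‖ ^ 2)⁻¹ := by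
    intro n
    simp only [normalizeSeq, inner_smul_right]
    rw [norm_mul, norm_inv, Complex.norm_real, norm_norm]
    ring
  set c : ℝ := A / (2 * B) with hc
  have hcpos : 0 < c := by positivity
  have hbound : ∀ n, ENNReal.ofReal (‖⟪z, normalizeSeq x n⟫‖ ^ 2)
      ≤ ENNReal.ofReal (c * ‖⟪z₀, M.orthogonalProjectionOnto (x n)⟫‖ ^ 2) := by
    intro n
    rw [hterm, hinner]
    rcases lt_or_ge n N with hn | hn
    · rw [hzero ⟨n, hn⟩]
      simp
    · apply ENNReal.ofReal_le_ofReal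
      rw [mul_comm c _]
      apply mul_le_mul_of_nonneg_left _ (by positivity)
      have hxn : Real.sqrt (2 * B / A) ≤ ‖x n‖ := hN n hn
      have h2BA : 2 * B / A ≤ ‖x n‖ ^ 2 := by
        have := Real.sq_sqrt (by positivity : (0:ℝ) ≤ 2 * B / A)
        nlinarith [Real.sqrt_nonneg (2 * B / A), norm_nonneg (x n)]
      have hx2pos : 0 < ‖x n‖ ^ 2 := lt_of_lt_of_le (by positivity) h2BA
      calc (‖x n‖ ^ 2)⁻¹ ≤ (2 * B / A)⁻¹ := inv_anti₀ (by positivity) h2BA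
        _ = c := by rw [hc]; field_simp
  -- sum it up
  have hsum : ∑' n, ENNReal.ofReal (‖⟪z, normalizeSeq x n⟫‖ ^ 2)
      ≤ ENNReal.ofReal (A / 2 * ‖z‖ ^ 2) := by
    calc ∑' n, ENNReal.ofReal (‖⟪z, normalizeSeq x n⟫‖ ^ 2)
        ≤ ∑' n, ENNReal.ofReal (c * ‖⟪z₀, M.orthogonalProjectionOnto (x n)⟫‖ ^ 2) :=
          ENNReal.tsum_le_tsum hbound
      _ = ENNReal.ofReal c * ∑' n, ENNReal.ofReal (‖⟪z₀, M.orthogonalProjectionOnto (x n)⟫‖ ^ 2) := by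
          simp_rw [ENNReal.ofReal_mul hcpos.le]; rw [ENNReal.tsum_mul_left]
      _ ≤ ENNReal.ofReal c * ENNReal.ofReal (B * ‖z₀‖ ^ 2) :=
          mul_le_mul_right (hBes z₀) _
      _ = ENNReal.ofReal (c * (B * ‖z₀‖ ^ 2)) := (ENNReal.ofReal_mul hcpos.le).symm
      _ = ENNReal.ofReal (A / 2 * ‖z‖ ^ 2) := by
          rw [hznorm, hc]; congr 1; field_simp
  have hz2 : 0 < ‖z‖ ^ 2 := pow_pos (norm_pos_iff.mpr hzne) 2
  have hfin := (hLF z).trans hsum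
  rw [ENNReal.ofReal_le_ofReal_iff (by positivity)] at hfin
  nlinarith
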